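/- Let N be a homogeneous Poisson process with parameter λ and X_t := N_t − λt. Then for every natural number N ≥ 1 and t ≥ 0, X_t^N = Σ_{i=1}^{N} C(N,i) ∫₀ᵗ X_{s−}^{N−i} dX_s + λ Σ_{i=2}^{N} C(N,i) ∫₀ᵗ X_{s−}^{N−i} ds almost surely. -/

import Mathlib

open MeasureTheory ProbabilityTheory Filter
open scoped ENNReal NNReal

/-- A homogeneous Poisson process with parameter `λ`: an `ℕ`-valued counting process
starting at `0`, with nondecreasing right-continuous paths of unit jumps,
independent increments, and `N_t − N_s ∼ Poisson(λ(t−s))`. -/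
structure IsPoissonProcess {Ω : Type*} [MeasurableSpace Ω] (P : Measure Ω)
    (Np : ℝ → Ω → ℕ) (lam : ℝ≥0) : Prop where
  measurable : ∀ t, Measurable (Np t)
  start : ∀ ω, ∀ t : ℝ, t ≤ 0 → Np t ω = 0
  mono : ∀ ω, ∀ s t : ℝ, s ≤ t → Np s ω ≤ Np t ω
  right_cont : ∀ ω, ∀ t : ℝ,
    Tendsto (fun u => (Np u ω : ℝ)) (nhdsWithin t (Set.Ioi t)) (nhds (Np t ω))
  unit_jumps : ∀ ω, ∀ t : ℝ,
    (Np t ω : ℝ) - Function.leftLim (fun u => (Np u ω : ℝ)) t ≤ 1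
  indep_incr : ∀ n : ℕ, ∀ t : Fin (n + 1) → ℝ, Monotone t →
    iIndepFun
      (fun i : Fin n => fun ω => Np (t i.succ) ω - Np (t i.castSucc) ω) P
  poisson_incr : ∀ s t : ℝ, 0 ≤ s → s ≤ t →
    Measure.map (fun ω => Np t ω - Np s ω) P =
      (poissonPMF (Real.toNNReal (t - s) * lam)).toMeasure

section Helpers
open Function

structure PathHyp (n : ℝ → ℕ) : Prop where
  mono : Monotone n
  zero : ∀ s : ℝ, s ≤ 0 → n s = 0
  rc : ∀ s : ℝ, ∃ ε > 0, ∀ u, s ≤ u → u < s + ε → n u = n s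
  lc : ∀ s : ℝ, ∃ ℓ, n s ≤ ℓ + 1 ∧ ∃ ε > 0, ∀ u, s - ε ≤ u → u < s → n u = ℓ

/-- left-constancy from monotonicity alone (without jump bound). -/
lemma left_const_of_monotone {n : ℝ → ℕ} (hm : Monotone n) (s : ℝ) :
    ∃ ℓ, ∃ ε > 0, ∀ u, s - ε ≤ u → u < s → n u = ℓ := by
  set S : Set ℕ := n '' Set.Ico (s - 1) s with hS
  have hne : S.Nonempty := ⟨n (s - 1), ⟨s - 1, ⟨le_refl _, by linarith⟩, rfl⟩⟩
  have hbdd : BddAbove S := by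
    refine ⟨n s, ?_⟩
    rintro x ⟨u, hu, rfl⟩
    exact hm hu.2.le
  obtain ⟨u0, hu0, hu0v⟩ := Nat.sSup_mem hne hbdd
  refine ⟨sSup S, s - u0, by linarith [hu0.2], fun u h1 h2 => ?_⟩
  have h3 : u0 ≤ u := by linarith
  have hmem : n u ∈ S := ⟨u, ⟨le_trans hu0.1 h3, h2⟩, rfl⟩
  exact le_antisymm (le_csSup hbdd hmem) (hu0v ▸ hm h3)

lemma leftLim_cast {n : ℝ → ℕ} {s : ℝ} {ℓ : ℕ} {ε : ℝ} (hε : 0 < ε)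
    (h : ∀ u, s - ε ≤ u → u < s → n u = ℓ) :
    leftLim (fun u => (n u : ℝ)) s = ℓ := by
  apply leftLim_eq_of_tendsto
  apply Tendsto.congr' (f₁ := fun _ => (ℓ : ℝ))
  · filter_upwards [Ioo_mem_nhdsLT_of_mem (a := s - ε) (c := s) ⟨by linarith, le_refl s⟩] with u hu
    exact (congrArg _ (h u hu.1.le hu.2)).symm
  · exact tendsto_const_nhds

lemma leftLim_affine {n : ℝ → ℕ} {s lam : ℝ} {ℓ : ℕ} {ε : ℝ} (hε : 0 < ε)
    (h : ∀ u, s - ε ≤ u → u < s → n u = ℓ) :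
    leftLim (fun u => (n u : ℝ) - lam * u) s = ℓ - lam * s := by
  apply leftLim_eq_of_tendsto
  apply Tendsto.congr' (f₁ := fun u => (ℓ : ℝ) - lam * u)
  · filter_upwards [Ioo_mem_nhdsLT_of_mem (a := s - ε) (c := s) ⟨by linarith, le_refl s⟩] with u hu
    rw [h u hu.1.le hu.2]
  · exact Tendsto.mono_left ((continuous_const.sub (continuous_const.mul continuous_id)).tendsto s) nhdsWithin_le_nhds

noncomputable def Tj (n : ℝ → ℕ) (k : ℕ) : ℝ := sInf {s : ℝ | k ≤ n s}

lemma T_set_pos {n : ℝ → ℕ} (h : PathHyp n) {k : ℕ} (hk1 : 1 ≤ k) :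
    {s : ℝ | k ≤ n s} ⊆ Set.Ioi 0 := by
  intro s hs
  by_contra hle
  simp only [Set.mem_Ioi, not_lt] at hle
  have := h.zero s hle
  simp only [Set.mem_setOf_eq, this] at hs
  omega

lemma T_bddBelow {n : ℝ → ℕ} (h : PathHyp n) {k : ℕ} (hk1 : 1 ≤ k) :
    BddBelow {s : ℝ | k ≤ n s} :=
  ⟨0, fun s hs => le_of_lt (T_set_pos h hk1 hs)⟩

lemma T_le {n : ℝ → ℕ} (h : PathHyp n) {t : ℝ} {k : ℕ} (hk1 : 1 ≤ k) (hk2 : k ≤ n t) :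
    Tj n k ≤ t := csInf_le (T_bddBelow h hk1) hk2

lemma T_lt_imp {n : ℝ → ℕ} (h : PathHyp n) {k : ℕ} (hk1 : 1 ≤ k)
    (u : ℝ) (hu : u < Tj n k) : n u < k := by
  by_contra hge
  push_neg at hge
  exact absurd (csInf_le (T_bddBelow h hk1) hge) (not_le.2 hu)

lemma T_val {n : ℝ → ℕ} (h : PathHyp n) {t : ℝ} {k : ℕ} (hk1 : 1 ≤ k) (hk2 : k ≤ n t) :
    n (Tj n k) = k := by
  obtain ⟨ε, hε, hrc⟩ := h.rc (Tj n k)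
  have hlt : Tj n k < Tj n k + ε := by linarith
  obtain ⟨s, hs, hslt⟩ := exists_lt_of_csInf_lt ⟨t, hk2⟩ hlt
  have hge : Tj n k ≤ s := by
    by_contra hle
    push_neg at hle
    exact absurd hs (not_le.2 (T_lt_imp h hk1 s hle))
  have h1 : k ≤ n (Tj n k) := by rw [← hrc s hge hslt]; exact hs
  obtain ⟨ℓ, hℓ1, ε', hε', hw⟩ := h.lc (Tj n k)
  have hu : n (Tj n k - ε'/2) = ℓ := hw _ (by linarith) (by linarith)
  have hℓk : ℓ < k := by
    rw [← hu]; exact T_lt_imp h hk1 _ (by linarith)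
  omega

lemma T_leftval {n : ℝ → ℕ} (h : PathHyp n) {t : ℝ} {k : ℕ} (hk1 : 1 ≤ k) (hk2 : k ≤ n t) :
    ∃ ε > 0, ∀ u, Tj n k - ε ≤ u → u < Tj n k → n u = k - 1 := by
  obtain ⟨ℓ, hℓ1, ε', hε', hw⟩ := h.lc (Tj n k)
  have hu : n (Tj n k - ε'/2) = ℓ := hw _ (by linarith) (by linarith)
  have hℓk : ℓ < k := by
    rw [← hu]; exact T_lt_imp h hk1 _ (by linarith)
  have hnv := T_val h hk1 hk2
  have : ℓ = k - 1 := by omega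
  exact ⟨ε', hε', this ▸ hw⟩

lemma T_pos {n : ℝ → ℕ} (h : PathHyp n) {t : ℝ} {k : ℕ} (hk1 : 1 ≤ k) (hk2 : k ≤ n t) :
    0 < Tj n k := by
  obtain ⟨ε, hε, hrc⟩ := h.rc 0
  have h0 : n 0 = 0 := h.zero 0 le_rfl
  have hlb : ∀ s ∈ {s : ℝ | k ≤ n s}, ε ≤ s := by
    intro s hs
    by_contra hlt
    push_neg at hlt
    rcases le_or_gt 0 s with h1 | h1
    · have := hrc s h1 (by linarith)
      simp only [Set.mem_setOf_eq, this, h0] at hs; omega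
    · have := h.zero s h1.le
      simp only [Set.mem_setOf_eq, this] at hs; omega
  exact lt_of_lt_of_le hε (le_csInf ⟨t, hk2⟩ hlb)

lemma T_le_iff {n : ℝ → ℕ} (h : PathHyp n) {t : ℝ} {k : ℕ} (hk1 : 1 ≤ k) (hk2 : k ≤ n t)
    (s : ℝ) : Tj n k ≤ s ↔ k ≤ n s := by
  constructor
  · intro hle
    calc k = n (Tj n k) := (T_val h hk1 hk2).symm
    _ ≤ n s := h.mono hle
  · intro hks
    exact csInf_le (T_bddBelow h hk1) hks

lemma T_strictmono {n : ℝ → ℕ} (h : PathHyp n) {t : ℝ} {k k' : ℕ}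
    (hk1 : 1 ≤ k) (hkk : k < k') (hk2 : k' ≤ n t) : Tj n k < Tj n k' := by
  have h1 := T_val h hk1 (le_trans (le_of_lt hkk) hk2)
  have h2 := T_val h (show 1 ≤ k' by omega) hk2
  by_contra hle
  push_neg at hle
  have := h.mono hle
  omega

/-- no jump away from jump times -/
lemma no_jump {n : ℝ → ℕ} (h : PathHyp n) {t : ℝ} {s : ℝ}
    (hs : s ∈ Set.Ioc (0:ℝ) t) (hns : ∀ k, 1 ≤ k → k ≤ n t → s ≠ Tj n k) :
    ∃ ε > 0, ∀ u, s - ε ≤ u → u < s → n u = n s := by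
  obtain ⟨ℓ, hℓ1, ε, hε, hw⟩ := h.lc s
  rcases Nat.eq_zero_or_pos (n s) with h0 | hpos
  · refine ⟨ε, hε, fun u h1 h2 => ?_⟩
    have := h.mono (le_of_lt h2)
    omega
  · set k := n s with hk
    have hkt : k ≤ n t := h.mono hs.2
    have hTk : Tj n k ≤ s := (T_le_iff h hpos hkt s).2 le_rfl
    have hTne : Tj n k < s := lt_of_le_of_ne hTk (fun e => hns k hpos hkt e.symm)
    set u := max (s - ε/2) ((Tj n k + s)/2) with hu
    have hu1 : u < s := max_lt (by linarith) (by linarith)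
    have hu2 : s - ε ≤ u := le_trans (by linarith) (le_max_left _ _)
    have hu3 : Tj n k ≤ u := le_trans (by linarith) (le_max_right _ _)
    have hval : n u = ℓ := hw u hu2 hu1
    have hge : k ≤ n u := (T_le_iff h hpos hkt u).1 hu3
    have hle : n u ≤ k := h.mono hu1.le
    have hℓ : ℓ = k := by omega
    exact ⟨ε, hε, fun v h1 h2 => by rw [hw v h1 h2, hℓ]⟩

lemma II_of_bdd {f : ℝ → ℝ} {a b C : ℝ} (hf : Measurable f)
    (hb : ∀ s ∈ Set.uIoc a b, |f s| ≤ C) : IntervalIntegrable f volume a b := by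
  rw [intervalIntegrable_iff]
  apply Integrable.mono' (g := fun _ => C) (integrableOn_const measure_Ioc_lt_top.ne)
  · exact hf.aestronglyMeasurable.restrict
  · rw [show Set.Ioc (min a b) (max a b) = Set.uIoc a b from rfl, ae_restrict_iff' measurableSet_uIoc]
    exact ae_of_all _ (fun s hs => by simpa [Real.norm_eq_abs] using hb s hs)

lemma x_measurable {n : ℝ → ℕ} (h : PathHyp n) (lam : ℝ) (p : ℕ) :
    Measurable (fun s : ℝ => ((n s : ℝ) - lam * s) ^ p) := by
  have h1 : Measurable (fun s : ℝ => (n s : ℝ)) :=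
    Monotone.measurable (fun a b hab => by exact_mod_cast h.mono hab)
  exact ((h1.sub (measurable_const.mul measurable_id)).pow_const p)

lemma x_II {n : ℝ → ℕ} (h : PathHyp n) (lam : ℝ) (p : ℕ) {a b : ℝ} (hab : a ≤ b) :
    IntervalIntegrable (fun s : ℝ => ((n s : ℝ) - lam * s) ^ p) volume a b := by
  apply II_of_bdd (x_measurable h lam p)
  intro s hs
  rw [Set.uIoc_of_le hab] at hs
  have h1 : |(n s : ℝ) - lam * s| ≤ (n b : ℝ) + |lam| * (|a| + |b|) := by
    have h2 : (0:ℝ) ≤ n s := Nat.cast_nonneg _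
    have h3 : (n s : ℝ) ≤ n b := by exact_mod_cast h.mono hs.2
    have h4 : |lam * s| ≤ |lam| * (|a| + |b|) := by
      rw [abs_mul]
      have : |s| ≤ |a| + |b| := by
        rcases abs_cases s with ⟨he, _⟩ | ⟨he, _⟩ <;> rcases abs_cases a with ⟨ha, _⟩ | ⟨ha, _⟩ <;>
          rcases abs_cases b with ⟨hbb, _⟩ | ⟨hbb, _⟩ <;> nlinarith [hs.1.le, hs.2]
      exact mul_le_mul_of_nonneg_left this (abs_nonneg lam)
    calc |(n s : ℝ) - lam * s| ≤ |(n s : ℝ)| + |lam * s| := abs_sub _ _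
    _ ≤ (n b : ℝ) + |lam| * (|a| + |b|) := by rw [abs_of_nonneg h2]; linarith
  calc |((n s : ℝ) - lam * s) ^ p| = |(n s : ℝ) - lam * s| ^ p := by rw [abs_pow]
  _ ≤ ((n b : ℝ) + |lam| * (|a| + |b|)) ^ p := pow_le_pow_left₀ (abs_nonneg _) h1 p

lemma ftc_affine (lam c a b : ℝ) (p : ℕ) :
    (c - lam * b) ^ (p + 1) - (c - lam * a) ^ (p + 1) =
      ∫ s in a..b, (-(lam * (p + 1))) * (c - lam * s) ^ p := by
  have hderiv : ∀ s ∈ Set.uIcc a b,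
      HasDerivAt (fun u => (c - lam * u) ^ (p + 1))
        ((-(lam * (p + 1))) * (c - lam * s) ^ p) s := by
    intro s _
    have h1 : HasDerivAt (fun u : ℝ => c - lam * u) (-lam) s := by
      simpa using ((hasDerivAt_id s).const_mul lam).const_sub c
    have : HasDerivAt (fun u => (c - lam * u) ^ (p + 1)) (↑(p + 1) * (c - lam * s) ^ (p + 1 - 1) * -lam) s := h1.pow (p + 1)
    convert this using 1
    push_cast
    ring
  rw [intervalIntegral.integral_eq_sub_of_hasDerivAt hderiv]
  exact (Continuous.intervalIntegrable (by continuity) a b)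

lemma key_lemma (lam : ℝ) : ∀ (m : ℕ) (n : ℝ → ℕ), PathHyp n → ∀ t : ℝ, 0 ≤ t → n t = m →
    ∀ p : ℕ,
    ((m : ℝ) - lam * t) ^ (p + 1) =
      (∑ k ∈ Finset.Icc 1 m, (((k : ℝ) - lam * Tj n k) ^ (p + 1) -
        ((k : ℝ) - 1 - lam * Tj n k) ^ (p + 1))) -
      lam * ((p : ℝ) + 1) * ∫ s in (0:ℝ)..t, ((n s : ℝ) - lam * s) ^ p := by
  intro m
  induction m with
  | zero =>
    intro n h t ht hnt p
    have hcongr : ∫ s in (0:ℝ)..t, ((n s : ℝ) - lam * s) ^ p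
        = ∫ s in (0:ℝ)..t, ((0:ℝ) - lam * s) ^ p := by
      apply intervalIntegral.integral_congr
      intro s hs
      rw [Set.uIcc_of_le ht] at hs
      have : n s = 0 := by
        have := h.mono hs.2
        omega
      simp [this]
    have hftc := ftc_affine lam 0 0 t p
    rw [intervalIntegral.integral_const_mul] at hftc
    simp only [Nat.cast_zero, Finset.Icc_self, Finset.Icc_eq_empty_of_lt (by norm_num : (1:ℕ) > 0)]
    rw [hcongr]
    simp only [Finset.sum_empty]
    have h00 : ((0:ℝ) - lam * 0) ^ (p+1) = 0 := by
      simp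
    rw [h00] at hftc
    linarith [hftc]
  | succ m IH =>
    intro n h t ht hnt p
    set τ := Tj n (m + 1) with hτdef
    have hk2 : m + 1 ≤ n t := hnt.ge
    have hτpos : 0 < τ := T_pos h (by omega) hk2
    have hτle : τ ≤ t := T_le h (by omega) hk2
    have hnτ : n τ = m + 1 := T_val h (by omega) hk2
    set n' : ℝ → ℕ := fun s => min (n s) m with hn'def
    have h' : PathHyp n' := by
      refine ⟨fun a b hab => min_le_min (h.mono hab) le_rfl,
        fun s hs => by simp [hn'def, h.zero s hs],
        fun s => ?_, fun s => ?_⟩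
      · obtain ⟨ε, hε, hrc⟩ := h.rc s
        exact ⟨ε, hε, fun u h1 h2 => by simp [hn'def, hrc u h1 h2]⟩
      · obtain ⟨ℓ, hℓ, ε, hε, hw⟩ := h.lc s
        exact ⟨min ℓ m, by simp [hn'def]; omega, ε, hε, fun u h1 h2 => by
          simp [hn'def, hw u h1 h2]⟩
    have hn't : n' t = m := by simp [hn'def, hnt]
    have hTeq : ∀ k ∈ Finset.Icc 1 m, Tj n' k = Tj n k := by
      intro k hk
      rw [Finset.mem_Icc] at hk
      unfold Tj
      congr 1
      ext s
      simp only [Set.mem_setOf_eq, hn'def, le_min_iff]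
      omega
    have hIH := IH n' h' t ht hn't p
    rw [Finset.sum_congr rfl (fun k hk => by rw [hTeq k hk])] at hIH
    -- integral splits
    have hII1 : IntervalIntegrable (fun s : ℝ => ((n s : ℝ) - lam * s) ^ p) volume 0 τ :=
      x_II h lam p hτpos.le
    have hII2 : IntervalIntegrable (fun s : ℝ => ((n s : ℝ) - lam * s) ^ p) volume τ t :=
      x_II h lam p hτle
    have hII1' : IntervalIntegrable (fun s : ℝ => ((n' s : ℝ) - lam * s) ^ p) volume 0 τ :=
      x_II h' lam p hτpos.le
    have hII2' : IntervalIntegrable (fun s : ℝ => ((n' s : ℝ) - lam * s) ^ p) volume τ t :=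
      x_II h' lam p hτle
    have hIsplit := intervalIntegral.integral_add_adjacent_intervals hII1 hII2
    have hI'split := intervalIntegral.integral_add_adjacent_intervals hII1' hII2'
    have h0eq : ∫ s in (0:ℝ)..τ, ((n s : ℝ) - lam * s) ^ p
        = ∫ s in (0:ℝ)..τ, ((n' s : ℝ) - lam * s) ^ p := by
      apply intervalIntegral.integral_congr_ae
      rw [Filter.eventually_iff, mem_ae_iff]
      refine measure_mono_null ?_ (measure_singleton (μ := volume) τ)
      · intro s hs
        simp only [Set.mem_compl_iff, Set.mem_setOf_eq, not_forall] at hs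
        obtain ⟨hsmem, hne⟩ := hs
        rw [Set.uIoc_of_le hτpos.le] at hsmem
        by_contra hsne
        simp only [Set.mem_singleton_iff] at hsne
        have hlt : s < τ := lt_of_le_of_ne hsmem.2 hsne
        have : n s < m + 1 := T_lt_imp h (by omega) s hlt
        have : n' s = n s := by simp [hn'def]; omega
        rw [this] at hne
        exact hne rfl
    have hJ1 : ∫ s in τ..t, ((n s : ℝ) - lam * s) ^ p
        = ∫ s in τ..t, (((m:ℝ) + 1) - lam * s) ^ p := by
      apply intervalIntegral.integral_congr
      intro s hs
      rw [Set.uIcc_of_le hτle] at hs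
      have h1 : n s = m + 1 := by
        have h2 := h.mono hs.1
        have h3 := h.mono hs.2
        omega
      simp [h1]
    have hJ2 : ∫ s in τ..t, ((n' s : ℝ) - lam * s) ^ p
        = ∫ s in τ..t, ((m:ℝ) - lam * s) ^ p := by
      apply intervalIntegral.integral_congr
      intro s hs
      rw [Set.uIcc_of_le hτle] at hs
      have h1 : n s = m + 1 := by
        have h2 := h.mono hs.1
        have h3 := h.mono hs.2
        omega
      have : n' s = m := by simp [hn'def, h1]
      simp [this]
    have hftc1 := ftc_affine lam ((m:ℝ)+1) τ t p
    have hftc2 := ftc_affine lam (m:ℝ) τ t p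
    rw [intervalIntegral.integral_const_mul] at hftc1 hftc2
    rw [Finset.sum_Icc_succ_top (by omega : 1 ≤ m + 1)]
    push_cast
    push_cast at hIH hftc1 hftc2
    linear_combination hIH + hftc1 - hftc2
      - lam * ((p:ℝ)+1) * hIsplit + lam * ((p:ℝ)+1) * hI'split
      + lam * ((p:ℝ)+1) * h0eq + lam * ((p:ℝ)+1) * hJ1 - lam * ((p:ℝ)+1) * hJ2

lemma rc_of_tendsto {n : ℝ → ℕ} (hm : Monotone n) (s : ℝ)
    (h : Tendsto (fun u => (n u : ℝ)) (nhdsWithin s (Set.Ioi s)) (nhds (n s))) :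
    ∃ ε > 0, ∀ u, s ≤ u → u < s + ε → n u = n s := by
  have h1 : ∀ᶠ u in nhdsWithin s (Set.Ioi s), dist ((n u : ℝ)) ((n s : ℝ)) < 1 :=
    Metric.tendsto_nhds.1 h 1 one_pos
  rw [eventually_nhdsWithin_iff, Metric.eventually_nhds_iff] at h1
  obtain ⟨ε, hε, hb⟩ := h1
  refine ⟨ε, hε, fun u h2 h3 => ?_⟩
  rcases eq_or_lt_of_le h2 with he | hlt
  · exact (congrArg n he).symm
  · have hd : dist u s < ε := by
      rw [Real.dist_eq, abs_of_pos (by linarith)]; linarith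
    have h4 := hb hd hlt
    rw [Real.dist_eq] at h4
    have h5 : (n u : ℝ) - n s < 1 := lt_of_abs_lt h4
    have h6 : n s ≤ n u := hm h2
    have h7 : (n u : ℝ) < n s + 1 := by linarith
    have : n u < n s + 1 := by exact_mod_cast h7
    omega

lemma binom_sum (y : ℝ) (N : ℕ) (hN : 1 ≤ N) :
    ∑ i ∈ Finset.Icc 1 N, (N.choose i : ℝ) * y ^ (N - i) = (y + 1) ^ N - y ^ N := by
  have h1 : ((1:ℝ) + y) ^ N = ∑ i ∈ Finset.range (N+1), 1 ^ i * y ^ (N - i) * (N.choose i : ℝ) :=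
    add_pow 1 y N
  have hins : Finset.range (N + 1) = insert 0 (Finset.Icc 1 N) := by
    ext i
    simp only [Finset.mem_range, Finset.mem_insert, Finset.mem_Icc]
    omega
  rw [hins, Finset.sum_insert (by simp)] at h1
  simp only [one_pow, one_mul, Nat.sub_zero, Nat.choose_zero_right, Nat.cast_one, mul_one] at h1
  have : ∑ i ∈ Finset.Icc 1 N, y ^ (N - i) * (N.choose i : ℝ)
      = ∑ i ∈ Finset.Icc 1 N, (N.choose i : ℝ) * y ^ (N - i) :=
    Finset.sum_congr rfl fun i _ => mul_comm _ _
  rw [this] at h1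
  have hy : (1:ℝ) + y = y + 1 := by ring
  rw [hy] at h1
  linarith

lemma algebra_reduce (N : ℕ) (hN : 1 ≤ N) (a b : ℕ → ℝ) (lr : ℝ) :
    (∑ i ∈ Finset.Icc 1 N, (N.choose i : ℝ) * (a i - lr * b i)) +
      lr * ∑ i ∈ Finset.Icc 2 N, (N.choose i : ℝ) * b i
    = (∑ i ∈ Finset.Icc 1 N, (N.choose i : ℝ) * a i) - lr * N * b 1 := by
  have hsplit : Finset.Icc 1 N = insert 1 (Finset.Icc 2 N) := by
    ext i
    simp only [Finset.mem_Icc, Finset.mem_insert]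
    omega
  have h1 : ∑ i ∈ Finset.Icc 1 N, (N.choose i : ℝ) * (a i - lr * b i)
      = ∑ i ∈ Finset.Icc 1 N, (N.choose i : ℝ) * a i
        - lr * ∑ i ∈ Finset.Icc 1 N, (N.choose i : ℝ) * b i := by
    rw [Finset.mul_sum, ← Finset.sum_sub_distrib]
    exact Finset.sum_congr rfl fun i _ => by ring
  have h2 : ∑ i ∈ Finset.Icc 1 N, (N.choose i : ℝ) * b i
      = (N.choose 1 : ℝ) * b 1 + ∑ i ∈ Finset.Icc 2 N, (N.choose i : ℝ) * b i := by
    rw [hsplit, Finset.sum_insert (by simp)]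
  rw [h1, h2, Nat.choose_one_right]
  ring

end Helpers

/-- For the compensated Poisson process `X_t = N_t − λt`,
`X_t^N = Σ_{i=1}^N C(N,i) ∫₀ᵗ X_{s−}^{N−i} dX_s + λ Σ_{i=2}^N C(N,i) ∫₀ᵗ X_{s−}^{N−i} ds`
almost surely.  Since `X` has finite variation, the stochastic integral
`∫₀ᵗ X_{s−}^{N−i} dX_s` is the pathwise Lebesgue–Stieltjes integral
`Σ_{0<s≤t} ΔN_s X_{s−}^{N−i} − λ ∫₀ᵗ X_{s−}^{N−i} ds`, which is the form used below. -/
theorem stmt11 {Ω : Type*} [MeasurableSpace Ω] (P : Measure Ω) [IsProbabilityMeasure P]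
    (Np : ℝ → Ω → ℕ) (lam : ℝ≥0) (hlam : 0 < lam) (hPp : IsPoissonProcess P Np lam)
    (X : ℝ → Ω → ℝ) (hX : ∀ t ω, X t ω = (Np t ω : ℝ) - lam * t)
    (Xm : ℝ → Ω → ℝ) (hXm : ∀ s ω, Xm s ω = Function.leftLim (fun u => X u ω) s)
    (ΔN : ℝ → Ω → ℝ)
    (hΔN : ∀ s ω, ΔN s ω = (Np s ω : ℝ) - Function.leftLim (fun u => (Np u ω : ℝ)) s) :
    ∀ᵐ ω ∂P, ∀ t : ℝ, 0 ≤ t → ∀ N : ℕ, 1 ≤ N →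
      (X t ω) ^ N =
        (∑ i ∈ Finset.Icc 1 N, (N.choose i : ℝ) *
          ((∑' s : Set.Ioc (0:ℝ) t, ΔN s ω * (Xm s ω) ^ (N - i)) -
            lam * ∫ s in (0:ℝ)..t, (Xm s ω) ^ (N - i))) +
        lam * ∑ i ∈ Finset.Icc 2 N, (N.choose i : ℝ) *
          ∫ s in (0:ℝ)..t, (Xm s ω) ^ (N - i) := by
  refine ae_of_all P fun ω t ht N hN => ?_
  have hmono : Monotone (fun s => Np s ω) := fun a b hab => hPp.mono ω a b hab
  set n : ℝ → ℕ := fun s => Np s ω with hn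
  have h : PathHyp n := by
    refine ⟨hmono, fun s hs => hPp.start ω s hs,
      fun s => rc_of_tendsto hmono s (hPp.right_cont ω s), fun s => ?_⟩
    obtain ⟨ℓ, ε, hε, hw⟩ := left_const_of_monotone hmono s
    refine ⟨ℓ, ?_, ε, hε, hw⟩
    have hj := hPp.unit_jumps ω s
    rw [leftLim_cast hε hw] at hj
    have h2 : (n s : ℝ) ≤ (ℓ : ℝ) + 1 := by linarith
    exact_mod_cast h2
  set m := n t with hm
  have hΔN' : ∀ s, ΔN s ω = (n s : ℝ) - Function.leftLim (fun u => (n u : ℝ)) s :=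
    fun s => hΔN s ω
  have hXfun : (fun u => X u ω) = fun u => (n u : ℝ) - (lam : ℝ) * u :=
    funext fun u => hX u ω
  -- values at jump times
  have hjump : ∀ k, 1 ≤ k → k ≤ m →
      ΔN (Tj n k) ω = 1 ∧ Xm (Tj n k) ω = ((k : ℝ) - 1) - (lam : ℝ) * Tj n k := by
    intro k hk1 hk2
    obtain ⟨ε, hε, hw⟩ := T_leftval (t := t) h hk1 hk2
    have hL : Function.leftLim (fun u => (n u : ℝ)) (Tj n k) = ((k - 1 : ℕ) : ℝ) :=
      leftLim_cast hε hw
    have hval := T_val (t := t) h hk1 hk2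
    constructor
    · rw [hΔN', hL, hval, Nat.cast_sub hk1]
      push_cast
      ring
    · rw [hXm, hXfun, leftLim_affine hε hw, Nat.cast_sub hk1]
      push_cast
      ring
  have hmemT : ∀ k : ℕ, k ∈ Finset.Icc 1 m → Tj n k ∈ Set.Ioc (0:ℝ) t := by
    intro k hk
    rw [Finset.mem_Icc] at hk
    exact ⟨T_pos (t := t) h hk.1 hk.2, T_le h hk.1 hk.2⟩
  -- tsum computation
  have hA : ∀ i : ℕ,
      (∑' s : Set.Ioc (0:ℝ) t, ΔN (s : ℝ) ω * (Xm (s : ℝ) ω) ^ (N - i))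
        = ∑ k ∈ Finset.Icc 1 m, (((k : ℝ) - 1) - (lam : ℝ) * Tj n k) ^ (N - i) := by
    intro i
    set F : Finset (Set.Ioc (0:ℝ) t) :=
      (Finset.Icc 1 m).attach.image
        (fun k => (⟨Tj n k.1, hmemT k.1 k.2⟩ : Set.Ioc (0:ℝ) t)) with hF
    rw [tsum_eq_sum (s := F) ?hvanish]
    case hvanish =>
      rintro ⟨s, hs⟩ hb
      have hns : ∀ k, 1 ≤ k → k ≤ n t → s ≠ Tj n k := by
        intro k h1 h2 he
        apply hb
        rw [hF, Finset.mem_image]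
        exact ⟨⟨k, Finset.mem_Icc.2 ⟨h1, h2⟩⟩, Finset.mem_attach _ _, Subtype.ext he.symm⟩
      obtain ⟨ε, hε, hw⟩ := no_jump h hs hns
      have : ΔN s ω = 0 := by
        rw [hΔN', leftLim_cast hε hw]
        ring
      rw [this, zero_mul]
    rw [hF, Finset.sum_image ?hinj]
    case hinj =>
      rintro ⟨k, hk⟩ - ⟨k', hk'⟩ - he
      have hTe : Tj n k = Tj n k' := congrArg Subtype.val he
      rw [Finset.mem_Icc] at hk hk'
      have e1 := T_val (t := t) h hk.1 hk.2
      have e2 := T_val (t := t) h hk'.1 hk'.2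
      rw [hTe] at e1
      exact Subtype.ext (e1.symm.trans e2)
    have hterm : ∀ k : { x // x ∈ Finset.Icc 1 m },
        ΔN (Tj n k.1) ω * (Xm (Tj n k.1) ω) ^ (N - i)
          = (((k.1 : ℝ) - 1) - (lam : ℝ) * Tj n k.1) ^ (N - i) := by
      rintro ⟨k, hk⟩
      rw [Finset.mem_Icc] at hk
      obtain ⟨hd, hxm⟩ := hjump k hk.1 hk.2
      rw [hd, hxm, one_mul]
    rw [Finset.sum_congr rfl fun k _ => hterm k]
    exact Finset.sum_attach (Finset.Icc 1 m)
      (fun x => ((x : ℝ) - 1 - (lam : ℝ) * Tj n x) ^ (N - i))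
  -- integral identification
  have hB : ∀ q : ℕ, ∫ s in (0:ℝ)..t, (Xm s ω) ^ q
      = ∫ s in (0:ℝ)..t, ((n s : ℝ) - (lam : ℝ) * s) ^ q := by
    intro q
    apply intervalIntegral.integral_congr_ae
    rw [Filter.eventually_iff, mem_ae_iff]
    refine measure_mono_null ?_ (((Set.finite_Icc 1 m).image (Tj n)).measure_zero volume)
    intro s hs
    simp only [Set.mem_compl_iff, Set.mem_setOf_eq, not_forall] at hs
    obtain ⟨hsmem, hne⟩ := hs
    rw [Set.uIoc_of_le ht] at hsmem
    by_contra hnotim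
    have hns : ∀ k, 1 ≤ k → k ≤ n t → s ≠ Tj n k := by
      intro k h1 h2 he
      exact hnotim ⟨k, Set.mem_Icc.2 ⟨h1, h2⟩, he.symm⟩
    obtain ⟨ε, hε, hw⟩ := no_jump h hsmem hns
    apply hne
    rw [hXm, hXfun, leftLim_affine hε hw]
  -- algebra
  obtain ⟨p, rfl⟩ : ∃ p, N = p + 1 := ⟨N - 1, by omega⟩
  have hkey := key_lemma (lam : ℝ) m n h t ht hm.symm p
  rw [algebra_reduce (p + 1) hN _ _ (lam : ℝ)]
  have hXt : X t ω = (m : ℝ) - (lam : ℝ) * t := by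
    rw [hm]
    simpa using congrFun hXfun t
  rw [hXt]
  rw [Finset.sum_congr rfl fun i _ => by rw [hA i, Finset.mul_sum]]
  rw [Finset.sum_comm]
  rw [Finset.sum_congr rfl fun (k : ℕ) (_ : k ∈ Finset.Icc 1 m) => binom_sum ((k : ℝ) - 1 - (lam : ℝ) * Tj n k) (p+1) hN]
  simp only [Nat.add_sub_cancel]
  rw [hB p]
  have hsum_eq : ∑ k ∈ Finset.Icc 1 m,
      (((((k : ℝ) - 1) - (lam : ℝ) * Tj n k) + 1) ^ (p+1)
        - (((k : ℝ) - 1) - (lam : ℝ) * Tj n k) ^ (p+1))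
      = ∑ k ∈ Finset.Icc 1 m, (((k : ℝ) - (lam : ℝ) * Tj n k) ^ (p + 1) -
        ((k : ℝ) - 1 - (lam : ℝ) * Tj n k) ^ (p + 1)) := by
    refine Finset.sum_congr rfl fun k _ => ?_
    ring_nf
  rw [hsum_eq]
  push_cast at hkey ⊢
  linarith [hkey]
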